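/- Let (P_n) be orthonormal polynomials with respect to a positive-definite linear functional L (deg P_n = n, L[P_m·P_n] = δ_{mn}), and let x_{n,1},…,x_{n,n} be the n distinct real zeros of P_n. Then the n×n matrix A with entries A_{i,j} = P_{n−i}(x_{n,j}) (1 ≤ i, j ≤ n) has all its leading principal minors nonsingular. -/

import Mathlib

open Polynomial Matrix

/-- Polynomials of degree < N are spanned by P 0, ..., P (N-1). -/
lemma aux_span (P : ℕ → Polynomial ℝ) (hlc : ∀ k, (P k).coeff k ≠ 0)
    (hdeg : ∀ k, (P k).degree ≤ (k : ℕ)) :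
    ∀ N : ℕ, ∀ p : Polynomial ℝ, p.degree < (N : ℕ) →
      ∃ c : ℕ → ℝ, p = ∑ k ∈ Finset.range N, Polynomial.C (c k) * P k := by
  intro N
  induction N with
  | zero =>
    intro p hp
    refine ⟨fun _ => 0, ?_⟩
    have : p = 0 := by
      rw [← Polynomial.degree_eq_bot]
      exact Nat.WithBot.lt_zero_iff.mp (by exact_mod_cast hp)
    simp [this]
  | succ N ih =>
    intro p hp
    set a := p.coeff N / (P N).coeff N with ha
    have h2 : (p - Polynomial.C a * P N).degree < (N : ℕ) := by
      rw [Polynomial.degree_lt_iff_coeff_zero]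
      intro mm hmm
      rcases Nat.lt_or_ge N mm with h | hge
      · have h1 : p.coeff mm = 0 := by
          apply Polynomial.coeff_eq_zero_of_degree_lt
          exact lt_of_lt_of_le hp (by exact_mod_cast Nat.succ_le_of_lt h)
        have h2 : (P N).coeff mm = 0 := by
          apply Polynomial.coeff_eq_zero_of_degree_lt
          exact lt_of_le_of_lt (hdeg N) (by exact_mod_cast h)
        simp [h1, h2]
      · have hj : N = mm := le_antisymm hmm hge
        subst hj
        simp only [Polynomial.coeff_sub, Polynomial.coeff_C_mul, ha]
        rw [div_mul_cancel₀ _ (hlc N), sub_self]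
    obtain ⟨c, hc⟩ := ih _ h2
    refine ⟨Function.update c N a, ?_⟩
    rw [Finset.sum_range_succ, Function.update_self]
    have : ∑ k ∈ Finset.range N, Polynomial.C (Function.update c N a k) * P k
        = ∑ k ∈ Finset.range N, Polynomial.C (c k) * P k := by
      refine Finset.sum_congr rfl fun k hk => ?_
      rw [Function.update_of_ne (by simp at hk; omega)]
    rw [this, ← hc]
    ring

/-- Orthogonality against lower-degree polynomials. -/
lemma aux_orth0 (L : Polynomial ℝ →ₗ[ℝ] ℝ) (P : ℕ → Polynomial ℝ)
    (hlc : ∀ k, (P k).coeff k ≠ 0) (hdeg : ∀ k, (P k).degree ≤ (k : ℕ))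
    (horth : ∀ i j, L (P i * P j) = if i = j then 1 else 0)
    (j : ℕ) (p : Polynomial ℝ) (hp : p.degree < (j : ℕ)) : L (p * P j) = 0 := by
  obtain ⟨c, rfl⟩ := aux_span P hlc hdeg j p hp
  rw [Finset.sum_mul, map_sum]
  refine Finset.sum_eq_zero fun k hk => ?_
  have hk' : k ≠ j := by simp at hk; omega
  have : Polynomial.C (c k) * P k * P j = c k • (P k * P j) := by
    rw [Polynomial.smul_eq_C_mul]; ring
  rw [this, L.map_smul, horth, if_neg hk', smul_zero]

/-- Pairing of a monic polynomial of exact degree j with P j. -/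
lemma aux_orthb (L : Polynomial ℝ →ₗ[ℝ] ℝ) (P : ℕ → Polynomial ℝ)
    (hlc : ∀ k, (P k).coeff k ≠ 0) (hdeg : ∀ k, (P k).degree ≤ (k : ℕ))
    (horth : ∀ i j, L (P i * P j) = if i = j then 1 else 0)
    (j : ℕ) (g : Polynomial ℝ) (hg : g.Monic) (hgd : g.natDegree = j) :
    L (g * P j) = ((P j).coeff j)⁻¹ := by
  set b := (P j).coeff j with hb
  have hbne : b ≠ 0 := hlc j
  have hlow : (g - Polynomial.C b⁻¹ * P j).degree < (j : ℕ) := by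
    rw [Polynomial.degree_lt_iff_coeff_zero]
    intro mm hmm
    rcases Nat.lt_or_ge j mm with h | hge
    · have h1 : g.coeff mm = 0 := by
        apply Polynomial.coeff_eq_zero_of_natDegree_lt; omega
      have h2 : (P j).coeff mm = 0 := by
        apply Polynomial.coeff_eq_zero_of_degree_lt
        exact lt_of_le_of_lt (hdeg j) (by exact_mod_cast h)
      simp [h1, h2]
    · have hj : j = mm := le_antisymm hmm hge
      subst hj
      have hgj : g.coeff j = 1 := by
        have := hg.coeff_natDegree
        rwa [hgd] at this
      simp only [Polynomial.coeff_sub, Polynomial.coeff_C_mul, hgj]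
      simp [← hb, inv_mul_cancel₀ hbne]
  have key : g * P j = (g - Polynomial.C b⁻¹ * P j) * P j + b⁻¹ • (P j * P j) := by
    rw [Polynomial.smul_eq_C_mul]; ring
  rw [key, map_add, L.map_smul, aux_orth0 L P hlc hdeg horth j _ hlow, horth, if_pos rfl]
  simp

theorem leading_principal_minors_nonsingular
    (L : Polynomial ℝ →ₗ[ℝ] ℝ)
    (hpos : ∀ p : Polynomial ℝ, p ≠ 0 → 0 < L (p ^ 2))
    (n : ℕ)
    (P : ℕ → Polynomial ℝ)
    (hdeg : ∀ k, (P k).natDegree = k)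
    (horth : ∀ i j, L (P i * P j) = if i = j then 1 else 0)
    (x : Fin n → ℝ)
    (hroot : ∀ j, (P n).eval (x j) = 0)
    (hinj : Function.Injective x)
    (A : Matrix (Fin n) (Fin n) ℝ)
    (hA : ∀ i j, A i j = (P (n - 1 - (i : ℕ))).eval (x j)) :
    ∀ m : ℕ, ∀ hm : m ≤ n,
      (Matrix.det (fun i j : Fin m => A (Fin.castLE hm i) (Fin.castLE hm j))) ≠ 0 := by
  have hPne : ∀ k, P k ≠ 0 := by
    intro k h
    have h1 := horth k k
    rw [h, mul_zero, map_zero, if_pos rfl] at h1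
    exact one_ne_zero h1.symm
  have hlc : ∀ k, (P k).coeff k ≠ 0 := by
    intro k
    have h1 : (P k).leadingCoeff ≠ 0 := Polynomial.leadingCoeff_ne_zero.mpr (hPne k)
    rw [Polynomial.leadingCoeff, hdeg k] at h1
    exact h1
  have hdegle : ∀ k, (P k).degree ≤ (k : ℕ) := by
    intro k
    calc (P k).degree ≤ ((P k).natDegree : WithBot ℕ) := Polynomial.degree_le_natDegree
    _ = (k : ℕ) := by rw [hdeg k]
  intro m hm
  show (Matrix.of fun i j : Fin m => A (Fin.castLE hm i) (Fin.castLE hm j)).det ≠ 0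
  rw [Ne, ← Matrix.exists_vecMul_eq_zero_iff]
  rintro ⟨c, hc0, hcv⟩
  set q : Polynomial ℝ := ∑ i : Fin m, Polynomial.C (c i) * P (n - 1 - (i : ℕ)) with hq
  have hqeval : ∀ j : Fin m, q.eval (x (Fin.castLE hm j)) = 0 := by
    intro j
    have h1 := congrFun hcv j
    simp only [Matrix.vecMul, dotProduct, Matrix.of_apply, hA, Pi.zero_apply] at h1
    rw [hq, Polynomial.eval_finset_sum]
    simpa using h1
  -- the full product of linear factors
  set Pi : Polynomial ℝ := ∏ j : Fin n, (X - Polynomial.C (x j)) with hPi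
  have hPimonic : Pi.Monic := monic_prod_of_monic _ _ fun j _ => monic_X_sub_C _
  have hPideg : Pi.natDegree = n := by
    rw [hPi, Polynomial.natDegree_prod _ _ (fun j _ => Polynomial.X_sub_C_ne_zero _)]
    simp
  have hPidvdPn : Pi ∣ P n := by
    apply Finset.prod_dvd_of_coprime
    · intro a ha b hb hab
      apply Polynomial.isCoprime_X_sub_C_of_isUnit_sub
      exact isUnit_iff_ne_zero.mpr (sub_ne_zero.mpr fun h => hab (hinj h))
    · intro j _
      exact Polynomial.dvd_iff_isRoot.mpr (hroot j)
  obtain ⟨s, hs⟩ := hPidvdPn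
  have hsne : s ≠ 0 := by
    intro h; rw [h, mul_zero] at hs; exact hPne n hs
  have hsdeg : s.natDegree = 0 := by
    have := Polynomial.natDegree_mul hPimonic.ne_zero hsne
    rw [← hs, hdeg n, hPideg] at this
    omega
  set a : ℝ := s.coeff 0 with haa
  have hsC : s = Polynomial.C a := (Polynomial.eq_C_of_natDegree_eq_zero hsdeg)
  have hane : a ≠ 0 := by
    intro h; rw [h, Polynomial.C_0] at hsC; exact hsne hsC
  have hPneq : P n = Polynomial.C a * Pi := by rw [hs, hsC]; ring
  -- key step: downward elimination of coefficients
  have key : ∀ i₀ : Fin m, (∀ s' : Fin m, (i₀ : ℕ) < (s' : ℕ) → c s' = 0) → c i₀ = 0 := by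
    intro i₀ hcs
    set t : Fin n := Fin.castLE hm i₀ with ht
    set g : Polynomial ℝ := ∏ j ∈ Finset.Ioi t, (X - Polynomial.C (x j)) with hg
    have hgmonic : g.Monic := monic_prod_of_monic _ _ fun j _ => monic_X_sub_C _
    have hgdeg : g.natDegree = n - 1 - (i₀ : ℕ) := by
      rw [hg, Polynomial.natDegree_prod _ _ (fun j _ => Polynomial.X_sub_C_ne_zero _)]
      simp [Fin.card_Ioi, ht]
    have hqdeg : q.natDegree ≤ n - 1 := by
      rw [hq]
      apply Polynomial.natDegree_sum_le_of_forall_le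
      intro i _
      calc (Polynomial.C (c i) * P (n - 1 - (i : ℕ))).natDegree
          ≤ (P (n - 1 - (i : ℕ))).natDegree := Polynomial.natDegree_C_mul_le _ _
      _ ≤ n - 1 := by rw [hdeg]; omega
    have hdvd : Pi ∣ q * g := by
      apply Finset.prod_dvd_of_coprime
      · intro a' ha' b' hb' hab
        apply Polynomial.isCoprime_X_sub_C_of_isUnit_sub
        exact isUnit_iff_ne_zero.mpr (sub_ne_zero.mpr fun h => hab (hinj h))
      · intro j _
        by_cases hj : t < j
        · exact dvd_mul_of_dvd_right (Finset.dvd_prod_of_mem _ (Finset.mem_Ioi.mpr hj)) _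
        · have hjm : (j : ℕ) < m := by
            have : (j : ℕ) ≤ (i₀ : ℕ) := by
              have := Fin.not_lt.mp hj
              simpa [ht, Fin.le_def] using this
            omega
          apply dvd_mul_of_dvd_left
          apply Polynomial.dvd_iff_isRoot.mpr
          have := hqeval ⟨(j : ℕ), hjm⟩
          have hxe : Fin.castLE hm (⟨(j : ℕ), hjm⟩ : Fin m) = j := by
            apply Fin.ext; simp
          rwa [hxe] at this
    obtain ⟨r, hr⟩ := hdvd
    have hL0 : L (q * g) = 0 := by
      have hqg : q * g = (Polynomial.C a⁻¹ * r) * P n := by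
        rw [hPneq, hr]
        rw [← mul_assoc, mul_comm (Polynomial.C a⁻¹) r, mul_assoc r, ← Polynomial.C_mul,
          inv_mul_cancel₀ hane, Polynomial.C_1, mul_one, mul_comm r Pi]
      rw [hqg]
      apply aux_orth0 L P hlc hdegle horth
      by_cases hr0 : r = 0
      · rw [hr0, mul_zero, Polynomial.degree_zero]
        exact bot_lt_iff_ne_bot.mpr (by exact_mod_cast WithBot.coe_ne_bot)
      · have hqgne : q * g ≠ 0 := by
          rw [hr]; exact mul_ne_zero hPimonic.ne_zero hr0
        have hqne : q ≠ 0 := fun h => hqgne (by rw [h, zero_mul])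
        have hnd : q.natDegree + g.natDegree = n + r.natDegree := by
          have h1 := Polynomial.natDegree_mul hqne hgmonic.ne_zero
          have h2 := Polynomial.natDegree_mul hPimonic.ne_zero hr0
          rw [← hr] at h2
          rw [h1, hPideg] at h2
          omega
        have hrd : r.natDegree < n := by
          have hgd' : g.natDegree ≤ n - 1 := by rw [hgdeg]; omega
          have him := i₀.isLt
          have hm1 : 1 ≤ n := by omega
          omega
        have hCr : (Polynomial.C a⁻¹ * r).natDegree = r.natDegree :=
          Polynomial.natDegree_C_mul (inv_ne_zero hane)
        have hne : Polynomial.C a⁻¹ * r ≠ 0 :=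
          mul_ne_zero (fun h => (inv_ne_zero hane) (by
            simpa using Polynomial.C_injective (by simpa using h))) hr0
        rw [← Polynomial.natDegree_lt_iff_degree_lt hne, hCr]
        exact hrd
    have hLsum : L (q * g) = c i₀ * ((P (n - 1 - (i₀ : ℕ))).coeff (n - 1 - (i₀ : ℕ)))⁻¹ := by
      rw [hq, Finset.sum_mul, map_sum]
      rw [Finset.sum_eq_single i₀]
      · have : Polynomial.C (c i₀) * P (n - 1 - (i₀ : ℕ)) * g
            = c i₀ • (g * P (n - 1 - (i₀ : ℕ))) := by
          rw [Polynomial.smul_eq_C_mul]; ring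
        rw [this, L.map_smul, aux_orthb L P hlc hdegle horth _ g hgmonic hgdeg]
        rfl
      · intro i _ hii
        rcases lt_or_gt_of_ne (fun h : (i : ℕ) = (i₀ : ℕ) => hii (Fin.ext h)) with h | h
        · -- i < i₀ : degree of g is too small
          have : Polynomial.C (c i) * P (n - 1 - (i : ℕ)) * g
              = c i • (g * P (n - 1 - (i : ℕ))) := by
            rw [Polynomial.smul_eq_C_mul]; ring
          rw [this, L.map_smul]
          rw [aux_orth0 L P hlc hdegle horth _ g ?_, smul_zero]
          have hgd2 : g.natDegree < n - 1 - (i : ℕ) := by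
            rw [hgdeg]
            have : (i₀ : ℕ) < m := i₀.isLt
            omega
          calc g.degree ≤ (g.natDegree : WithBot ℕ) := Polynomial.degree_le_natDegree
          _ < ((n - 1 - (i : ℕ) : ℕ) : WithBot ℕ) := by exact_mod_cast hgd2
        · -- i₀ < i : coefficient is zero
          rw [hcs i h]
          simp
      · intro h
        exact absurd (Finset.mem_univ i₀) h
    have hbinv : ((P (n - 1 - (i₀ : ℕ))).coeff (n - 1 - (i₀ : ℕ)))⁻¹ ≠ 0 :=
      inv_ne_zero (hlc _)
    have := hL0
    rw [hLsum] at this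
    exact (mul_eq_zero.mp this).resolve_right hbinv
  -- downward induction to kill all coefficients
  have hzero : ∀ d : ℕ, ∀ i : Fin m, m - d ≤ (i : ℕ) → c i = 0 := by
    intro d
    induction d with
    | zero => intro i hi; exact absurd hi (by have := i.isLt; omega)
    | succ d ih =>
      intro i hi
      by_cases h : m - d ≤ (i : ℕ)
      · exact ih i h
      · apply key i
        intro s' hs'
        exact ih s' (by omega)
  exact hc0 (funext fun i => hzero m i (by omega))
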